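/- Define 6×6 matrices A^0 = I₆, A^1 = |1⟩⟨2| + |4⟩⟨5|, A^2 = |2⟩⟨3| + |5⟩⟨6|, A^3 = |3⟩⟨4|, and X = |4⟩⟨1| + |5⟩⟨2| + |6⟩⟨3|. Then for every N and every word w ∈ {0,1,2,3}^N, Tr[X A^{w_1} ⋯ A^{w_N}] = 1 if w belongs to the language 0*(1 0* 2 0* 3 ∪ 2 0* 3 0* 1 ∪ 3 0* 1 0* 2)0*, and 0 otherwise. -/

import Mathlib

open Matrix

/-- The matrix unit `|i⟩⟨j| = E_{ij}` in `M_6(ℂ)` (0-indexed). -/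
noncomputable def E16 (i j : Fin 6) : Matrix (Fin 6) (Fin 6) ℂ :=
  Matrix.single i j 1

/-- `A^0 = I₆`, `A^1 = |1⟩⟨2| + |4⟩⟨5|`, `A^2 = |2⟩⟨3| + |5⟩⟨6|`, `A^3 = |3⟩⟨4|`
(1-indexed kets, hence 0-indexed matrix units). -/
noncomputable def A16 : Fin 4 → Matrix (Fin 6) (Fin 6) ℂ :=
  ![1, E16 0 1 + E16 3 4, E16 1 2 + E16 4 5, E16 2 3]

/-- `X = |4⟩⟨1| + |5⟩⟨2| + |6⟩⟨3|`. -/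
noncomputable def X16 : Matrix (Fin 6) (Fin 6) ℂ := E16 3 0 + E16 4 1 + E16 5 2

/-- `w ∈ 0*(1 0* 2 0* 3 ∪ 2 0* 3 0* 1 ∪ 3 0* 1 0* 2)0*`: deleting the `0`s from `w`
leaves exactly `123`, `231` or `312`. -/
def InCyclicLang (w : List (Fin 4)) : Prop :=
  w.filter (fun a => decide (a ≠ 0)) = [1, 2, 3] ∨
  w.filter (fun a => decide (a ≠ 0)) = [2, 3, 1] ∨
  w.filter (fun a => decide (a ≠ 0)) = [3, 1, 2]

/-- Transition function of the 14-state automaton given by the matrix monoid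
(state `4` is the dead state). -/
def d16 : ℕ → Fin 4 → ℕ := fun s a =>
  match s, a with
  | 0, 0 => 0 | 0, 1 => 1 | 0, 2 => 2 | 0, 3 => 3
  | 1, 0 => 1 | 1, 1 => 4 | 1, 2 => 5 | 1, 3 => 4
  | 2, 0 => 2 | 2, 1 => 4 | 2, 2 => 4 | 2, 3 => 6
  | 3, 0 => 3 | 3, 1 => 7 | 3, 2 => 4 | 3, 3 => 4
  | 5, 0 => 5 | 5, 1 => 4 | 5, 2 => 4 | 5, 3 => 8
  | 6, 0 => 6 | 6, 1 => 9 | 6, 2 => 4 | 6, 3 => 4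
  | 7, 0 => 7 | 7, 1 => 4 | 7, 2 => 10 | 7, 3 => 4
  | 8, 0 => 8 | 8, 1 => 11 | 8, 2 => 4 | 8, 3 => 4
  | 9, 0 => 9 | 9, 1 => 4 | 9, 2 => 12 | 9, 3 => 4
  | 10, 0 => 10 | 10, 1 => 4 | 10, 2 => 4 | 10, 3 => 4
  | 11, 0 => 11 | 11, 1 => 4 | 11, 2 => 13 | 11, 3 => 4
  | 12, 0 => 12 | 12, 1 => 4 | 12, 2 => 4 | 12, 3 => 4
  | 13, 0 => 13 | 13, 1 => 4 | 13, 2 => 4 | 13, 3 => 4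
  | _, _ => 4

/-- The matrix attached to each state. -/
noncomputable def mat16 : ℕ → Matrix (Fin 6) (Fin 6) ℂ := fun s =>
  match s with
  | 0 => 1
  | 1 => E16 0 1 + E16 3 4
  | 2 => E16 1 2 + E16 4 5
  | 3 => E16 2 3
  | 5 => E16 0 2 + E16 3 5
  | 6 => E16 1 3
  | 7 => E16 2 4
  | 8 => E16 0 3
  | 9 => E16 1 4
  | 10 => E16 2 5
  | 11 => E16 0 4
  | 12 => E16 1 5
  | 13 => E16 0 5
  | _ => 0

/-- The unique `0`-free word reaching each state (`none` for dead/unreachable states). -/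
def word16 : ℕ → Option (List (Fin 4)) := fun s =>
  match s with
  | 0 => some []
  | 1 => some [1]
  | 2 => some [2]
  | 3 => some [3]
  | 5 => some [1, 2]
  | 6 => some [2, 3]
  | 7 => some [3, 1]
  | 8 => some [1, 2, 3]
  | 9 => some [2, 3, 1]
  | 10 => some [3, 1, 2]
  | 11 => some [1, 2, 3, 1]
  | 12 => some [2, 3, 1, 2]
  | 13 => some [1, 2, 3, 1, 2]
  | _ => none

lemma E16_mul (i j k l : Fin 6) : E16 i j * E16 k l = if j = k then E16 i l else 0 := by
  split
  · subst ‹j = k›; simp [E16]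
  · exact Matrix.single_mul_single_of_ne (c := 1) (i := i) (j := j) (k := k) (h := ‹j ≠ k›) (d := 1)

lemma E16_trace (i j : Fin 6) : (E16 i j).trace = if i = j then 1 else 0 := by
  split
  · subst ‹i = j›; exact Matrix.trace_single_eq_same i 1
  · exact Matrix.trace_single_eq_of_ne i j 1 ‹i ≠ j›

lemma d16_big (t : ℕ) (a : Fin 4) : d16 (t + 14) a = 4 := by fin_cases a <;> rfl

set_option maxHeartbeats 2000000 in
lemma mat16_step (s : ℕ) (a : Fin 4) : mat16 (d16 s a) = mat16 s * A16 a := by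
  rcases Nat.lt_or_ge s 14 with h | h
  · interval_cases s <;> fin_cases a <;>
      simp [d16, mat16, A16, add_mul, mul_add, E16_mul]
  · obtain ⟨t, rfl⟩ : ∃ t, s = t + 14 := ⟨s - 14, by omega⟩
    rw [d16_big]
    exact (zero_mul _).symm

lemma mat16_run (w : List (Fin 4)) (s : ℕ) :
    mat16 (w.foldl d16 s) = mat16 s * (w.map A16).prod := by
  induction w generalizing s with
  | nil => simp
  | cons a w ih =>
      simp only [List.foldl_cons, List.map_cons, List.prod_cons, ih, mat16_step, mul_assoc]

lemma d16_zero' (s : ℕ) (hs : s ≤ 13) : d16 s 0 = s := by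
  interval_cases s <;> rfl

lemma d16_le (s : ℕ) (a : Fin 4) : d16 s a ≤ 13 := by
  rcases Nat.lt_or_ge s 14 with h | h
  · interval_cases s <;> fin_cases a <;> simp [d16]
  · obtain ⟨t, rfl⟩ : ∃ t, s = t + 14 := ⟨s - 14, by omega⟩
    rw [d16_big]; omega

lemma foldl_filter (w : List (Fin 4)) (s : ℕ) (hs : s ≤ 13) :
    w.foldl d16 s = (w.filter (fun a => decide (a ≠ 0))).foldl d16 s := by
  induction w generalizing s with
  | nil => rfl
  | cons a w ih =>
      by_cases h : a = 0
      · subst h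
        simpa [d16_zero' s hs] using ih s hs
      · simp only [List.foldl_cons, List.filter_cons]
        rw [if_pos (by simpa using h)]
        rw [List.foldl_cons]
        exact ih _ (d16_le s a)

set_option maxHeartbeats 1000000 in
lemma word16_step (s : ℕ) (a : Fin 4) (g : List (Fin 4)) (ha : a ≠ 0)
    (h : ∀ u, word16 s = some u → g = u) :
    ∀ v, word16 (d16 s a) = some v → g ++ [a] = v := by
  intro v hv
  rcases Nat.lt_or_ge s 14 with hs | hs
  · interval_cases s <;> fin_cases a <;>
      first
        | exact absurd rfl ha
        | (cases hv; done)
        | (rw [h _ rfl]; exact Option.some.inj hv)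
  · obtain ⟨t, rfl⟩ : ∃ t, s = t + 14 := ⟨s - 14, by omega⟩
    rw [d16_big] at hv
    nomatch hv

lemma word16_run (g : List (Fin 4)) (hg : ∀ a ∈ g, a ≠ 0) :
    ∀ u, word16 (g.foldl d16 0) = some u → g = u := by
  induction g using List.reverseRecOn with
  | nil => intro u hu; simpa [word16] using hu.symm
  | append_singleton l a ih =>
      rw [List.foldl_append]
      exact word16_step _ a l (hg a (by simp))
        (ih fun b hb => hg b (by simp [hb]))

set_option maxHeartbeats 1000000 in
lemma trace16 (s : ℕ) :
    (X16 * mat16 s).trace = if s = 8 ∨ s = 9 ∨ s = 10 then 1 else 0 := by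
  rcases Nat.lt_or_ge s 14 with h | h
  · interval_cases s <;>
      simp [mat16, X16, add_mul, mul_add, E16_mul, E16_trace, Matrix.trace_add]
  · obtain ⟨t, rfl⟩ : ∃ t, s = t + 14 := ⟨s - 14, by omega⟩
    rw [if_neg (by omega)]
    have h0 : mat16 (t + 14) = 0 := rfl
    rw [h0, mul_zero]
    exact Matrix.trace_zero (Fin 6) ℂ

/-- For every `N` and every word `w ∈ {0,1,2,3}^N`, `Tr[X A^{w_1} ⋯ A^{w_N}]` is `1` if
`w ∈ 0*(1 0* 2 0* 3 ∪ 2 0* 3 0* 1 ∪ 3 0* 1 0* 2)0*` and `0` otherwise. -/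
theorem stmt16 (w : List (Fin 4)) :
    (InCyclicLang w → (X16 * (w.map A16).prod).trace = 1) ∧
    (¬ InCyclicLang w → (X16 * (w.map A16).prod).trace = 0) := by
  have hprod : (w.map A16).prod = mat16 (w.foldl d16 0) := by
    rw [mat16_run w 0]
    show _ = (1 : Matrix (Fin 6) (Fin 6) ℂ) * _
    rw [one_mul]
  set s := w.foldl d16 0 with hs
  have hfilter : s = (w.filter (fun a => decide (a ≠ 0))).foldl d16 0 :=
    foldl_filter w 0 (by norm_num)
  constructor
  · rintro (h | h | h) <;>
      · rw [hprod, trace16, hfilter, h, if_pos (by decide)]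
  · intro h
    rw [hprod, trace16, if_neg]
    have hg : ∀ a ∈ w.filter (fun a => decide (a ≠ 0)), a ≠ 0 :=
      fun a ha => by simpa using List.of_mem_filter ha
    rintro (h8 | h9 | h10)
    · exact h (Or.inl ((word16_run (w.filter (fun a => decide (a ≠ 0))) hg [1, 2, 3]
        (by rw [← hfilter, h8]; rfl))))
    · exact h (Or.inr (Or.inl ((word16_run (w.filter (fun a => decide (a ≠ 0))) hg [2, 3, 1]
        (by rw [← hfilter, h9]; rfl)))))
    · exact h (Or.inr (Or.inr ((word16_run (w.filter (fun a => decide (a ≠ 0))) hg [3, 1, 2]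
        (by rw [← hfilter, h10]; rfl)))))
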